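/- arXiv:1910.09972 — 2 statements merged into one kernel-verified Lean document; each statement's English description precedes it below -/
import Mathlib

section
/- (Proposition 1, affinity-based case, symmetry) The composition of the cross-similarity CS with the affinity-based cross-set transformation is symmetric: for every N, d, d_g, d_w : ℕ, all Θ₁, Θ₂ : Matrix (Fin d_g) (Fin d) ℝ, every W : Matrix (Fin d_w) (Fin d_g) ℝ, and all X, Y : Fin N → (Fin d → ℝ), the function F(X, Y) := CS(g_aff(X, Y), g_aff(Y, X) | W) satisfies F(X, Y) = F(Y, X). -/
open Matrix

/-- The cross-similarity of two tuples of feature vectors. -/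
noncomputable def CS {N M d dw : ℕ} (W : Matrix (Fin dw) (Fin d) ℝ)
    (X : Fin N → Fin d → ℝ) (Y : Fin M → Fin d → ℝ) : ℝ :=
  (1 / ((N : ℝ) * M)) * ∑ n : Fin N, ∑ m : Fin M,
    max 0 ((W.mulVec (X n) ⬝ᵥ W.mulVec (Y m)) / Real.sqrt dw)

/-- The affinity-based cross-set map. -/
noncomputable def gAff {N M d dg : ℕ} (Θ₁ Θ₂ : Matrix (Fin dg) (Fin d) ℝ)
    (X : Fin N → Fin d → ℝ) (Y : Fin M → Fin d → ℝ) : Fin N → Fin dg → ℝ :=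
  fun n => (1 / 2 : ℝ) • (Θ₁.mulVec (X n) + (1 / (M : ℝ)) • ∑ m : Fin M,
    max 0 ((Θ₁.mulVec (X n) ⬝ᵥ Θ₂.mulVec (Y m)) / Real.sqrt dg) • Θ₂.mulVec (Y m))

/-- The composition of CS with the affinity-based cross-set transformation
(with shared weights) is symmetric. -/
theorem CS_gAff_symm (N d dg dw : ℕ)
    (Θ₁ Θ₂ : Matrix (Fin dg) (Fin d) ℝ) (W : Matrix (Fin dw) (Fin dg) ℝ)
    (X Y : Fin N → Fin d → ℝ) :
    CS W (gAff Θ₁ Θ₂ X Y) (gAff Θ₁ Θ₂ Y X)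
      = CS W (gAff Θ₁ Θ₂ Y X) (gAff Θ₁ Θ₂ X Y) := by
  unfold CS
  rw [Finset.sum_comm]
  congr 1
  apply Finset.sum_congr rfl; intro n _
  apply Finset.sum_congr rfl; intro m _
  rw [dotProduct_comm]
end

section
/- (Proposition 1, affinity-based case, permutation invariance) The composition of the cross-similarity CS with the affinity-based cross-set transformation is permutation invariant: for every N, M, d, d_g, d_w : ℕ, all Θ₁, Θ₂ : Matrix (Fin d_g) (Fin d) ℝ, every W : Matrix (Fin d_w) (Fin d_g) ℝ, all X : Fin N → (Fin d → ℝ) and Y : Fin M → (Fin d → ℝ), and all permutations π : Equiv.Perm (Fin N) and σ : Equiv.Perm (Fin M), the function F(X, Y) := CS(g_aff(X, Y), g_aff(Y, X) | W) satisfies F(X ∘ π, Y ∘ σ) = F(X, Y). -/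
open Matrix

lemma gAff_comp {N M d dg : ℕ} (Θ₁ Θ₂ : Matrix (Fin dg) (Fin d) ℝ)
    (X : Fin N → Fin d → ℝ) (Y : Fin M → Fin d → ℝ)
    (π : Equiv.Perm (Fin N)) (σ : Equiv.Perm (Fin M)) :
    gAff Θ₁ Θ₂ (X ∘ π) (Y ∘ σ) = (gAff Θ₁ Θ₂ X Y) ∘ π := by
  funext n
  simp only [gAff, Function.comp_apply]
  congr 3
  exact Equiv.sum_comp σ (fun m =>
    max 0 ((Θ₁.mulVec (X (π n)) ⬝ᵥ Θ₂.mulVec (Y m)) / Real.sqrt dg) • Θ₂.mulVec (Y m))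

lemma CS_comp {N M d dw : ℕ} (W : Matrix (Fin dw) (Fin d) ℝ)
    (X : Fin N → Fin d → ℝ) (Y : Fin M → Fin d → ℝ)
    (π : Equiv.Perm (Fin N)) (σ : Equiv.Perm (Fin M)) :
    CS W (X ∘ π) (Y ∘ σ) = CS W X Y := by
  simp only [CS, Function.comp_apply]
  congr 1
  rw [← Equiv.sum_comp π (fun n => ∑ m : Fin M,
    max 0 ((W.mulVec (X n) ⬝ᵥ W.mulVec (Y m)) / Real.sqrt dw))]
  refine Finset.sum_congr rfl fun n _ => ?_
  exact Equiv.sum_comp σ (fun m =>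
    max 0 ((W.mulVec (X (π n)) ⬝ᵥ W.mulVec (Y m)) / Real.sqrt dw))

/-- The composition of CS with the affinity-based cross-set transformation
(with shared weights) is permutation invariant. -/
theorem CS_gAff_perm_invariant (N M d dg dw : ℕ)
    (Θ₁ Θ₂ : Matrix (Fin dg) (Fin d) ℝ) (W : Matrix (Fin dw) (Fin dg) ℝ)
    (X : Fin N → Fin d → ℝ) (Y : Fin M → Fin d → ℝ)
    (π : Equiv.Perm (Fin N)) (σ : Equiv.Perm (Fin M)) :
    CS W (gAff Θ₁ Θ₂ (X ∘ π) (Y ∘ σ)) (gAff Θ₁ Θ₂ (Y ∘ σ) (X ∘ π))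
      = CS W (gAff Θ₁ Θ₂ X Y) (gAff Θ₁ Θ₂ Y X) := by
  rw [gAff_comp, gAff_comp, CS_comp]
end
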